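/- Let Γ be a max-type gain operator Γ(s) = (sup_j γ_{ij}(s_j))_{i∈ℕ} built from a family {γ_{ij}} of functions in 𝒦 ∪ {0}. Assume: (a) Γ is well-defined and continuous on ℓ∞⁺; (b) the induced system s(k+1) = Γ(s(k)) is uniformly globally stable, i.e. there exists σ ∈ 𝒦∞ with ‖Γᵏ(s)‖_{ℓ∞} ≤ σ(‖s‖_{ℓ∞}) for all k and s; (c) each trajectory converges to zero componentwise. Then for any s, b ∈ ℓ∞⁺, s ≤ Γ(s) ⊕ b implies ‖s‖_{ℓ∞} ≤ σ(‖b‖_{ℓ∞}) (the monotone bounded invertibility / implication property). -/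

import Mathlib

/-- The max-type gain operator built from a family of gains `γ i j`. -/
noncomputable def gainOp (γ : ℕ → ℕ → ℝ → ℝ) (s : ℕ → ℝ) : ℕ → ℝ :=
  fun i => ⨆ j, γ i j (s j)

/-- Auxiliary sequence: iterated "max-plus" accumulation of `b`. -/
noncomputable def Bseq (γ : ℕ → ℕ → ℝ → ℝ) (b : ℕ → ℝ) : ℕ → ℕ → ℝ
  | 0 => b
  | (k+1) => gainOp γ (Bseq γ b k) ⊔ b

lemma bddAbove_range_sup {x y : ℕ → ℝ} (hx : BddAbove (Set.range x))
    (hy : BddAbove (Set.range y)) : BddAbove (Set.range (x ⊔ y)) := by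
  obtain ⟨Cx, hCx⟩ := hx
  obtain ⟨Cy, hCy⟩ := hy
  refine ⟨max Cx Cy, ?_⟩
  rintro _ ⟨i, rfl⟩
  have h1 : x i ≤ Cx := hCx ⟨i, rfl⟩
  have h2 : y i ≤ Cy := hCy ⟨i, rfl⟩
  simp only [Pi.sup_apply, sup_le_iff]
  constructor
  · exact h1.trans (le_max_left _ _)
  · exact h2.trans (le_max_right _ _)

/-- For a well-defined continuous max-type gain operator `Γ` built from
gains in `𝒦 ∪ {0}`, if the induced system is uniformly globally stable with
`σ ∈ 𝒦∞` and each trajectory converges to zero componentwise, then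
`s ≤ Γ(s) ⊕ b` implies `‖s‖ ≤ σ(‖b‖)`. -/
theorem stmt10 (γ : ℕ → ℕ → ℝ → ℝ)
    (hγ : ∀ i j, γ i j = 0 ∨ (γ i j 0 = 0 ∧ StrictMonoOn (γ i j) (Set.Ici 0) ∧
      ContinuousOn (γ i j) (Set.Ici 0) ∧ ∀ r : ℝ, 0 ≤ r → 0 ≤ γ i j r))
    (hwd : ∀ s : ℕ → ℝ, 0 ≤ s → BddAbove (Set.range s) →
      BddAbove (Set.range (gainOp γ s)))
    (hcont : ∀ s : ℕ → ℝ, 0 ≤ s → BddAbove (Set.range s) → ∀ ε : ℝ, 0 < ε →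
      ∃ δ > (0 : ℝ), ∀ t : ℕ → ℝ, 0 ≤ t → BddAbove (Set.range t) →
        (⨆ i, |s i - t i|) ≤ δ → (⨆ i, |gainOp γ s i - gainOp γ t i|) ≤ ε)
    (σ : ℝ → ℝ) (hσ0 : σ 0 = 0) (hσmono : StrictMonoOn σ (Set.Ici 0))
    (hσcont : ContinuousOn σ (Set.Ici 0))
    (hσunb : Filter.Tendsto σ Filter.atTop Filter.atTop)
    (hUGS : ∀ s : ℕ → ℝ, 0 ≤ s → BddAbove (Set.range s) →
      ∀ k : ℕ, (⨆ i, |(gainOp γ)^[k] s i|) ≤ σ (⨆ i, |s i|))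
    (hcomp : ∀ s : ℕ → ℝ, 0 ≤ s → BddAbove (Set.range s) →
      ∀ i, Filter.Tendsto (fun k => (gainOp γ)^[k] s i) Filter.atTop (nhds 0)) :
    ∀ s b : ℕ → ℝ, 0 ≤ s → BddAbove (Set.range s) → 0 ≤ b → BddAbove (Set.range b) →
      s ≤ gainOp γ s ⊔ b → (⨆ i, |s i|) ≤ σ (⨆ i, |b i|) := by
  intro s b hs hsb hb hbb hle
  -- basic facts about the gains
  have hnn : ∀ i j r, 0 ≤ r → 0 ≤ γ i j r := by
    intro i j r hr
    rcases hγ i j with h | h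
    · simp [h]
    · exact h.2.2.2 r hr
  have hz : ∀ i j, γ i j 0 = 0 := by
    intro i j
    rcases hγ i j with h | h
    · simp [h]
    · exact h.1
  have hmono : ∀ i j, MonotoneOn (γ i j) (Set.Ici 0) := by
    intro i j
    rcases hγ i j with h | h
    · intro a _ c _ _; simp [h]
    · exact h.2.1.monotoneOn
  have hσm : MonotoneOn σ (Set.Ici 0) := hσmono.monotoneOn
  have habs_range : ∀ x : ℕ → ℝ, 0 ≤ x → (fun m => |x m|) = x := by
    intro x hx; funext m; exact abs_of_nonneg (hx m)
  have gnn : ∀ x : ℕ → ℝ, 0 ≤ x → ∀ i, 0 ≤ gainOp γ x i := by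
    intro x hx i
    exact Real.iSup_nonneg (fun j => hnn i j _ (hx j))
  -- key pointwise bound: γ i j r ≤ σ r for r ≥ 0
  have key1 : ∀ i j r, 0 ≤ r → γ i j r ≤ σ r := by
    intro i j r hr
    set e : ℕ → ℝ := fun m => if m = j then r else 0 with he
    have hen : 0 ≤ e := by
      intro m; dsimp [e]; split
      · exact hr
      · exact le_refl _
    have heb : BddAbove (Set.range e) := by
      refine ⟨r, ?_⟩
      rintro _ ⟨m, rfl⟩
      dsimp [e]; split
      · exact le_refl _
      · exact hr
    have hnorm : (⨆ m, |e m|) = r := by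
      rw [habs_range e hen]
      apply le_antisymm
      · apply ciSup_le
        intro m; dsimp [e]; split
        · exact le_refl _
        · exact hr
      · have := le_ciSup heb j
        simpa [e] using this
    have h1 := hUGS e hen heb 1
    rw [hnorm] at h1
    have hΓe : γ i j r ≤ gainOp γ e i := by
      have hbdd : BddAbove (Set.range fun j' => γ i j' (e j')) := by
        refine ⟨max (γ i j r) 0, ?_⟩
        rintro _ ⟨j', rfl⟩
        by_cases hj : j' = j
        · subst hj; simp [e]
        · simp [e, hj, hz]
      have := le_ciSup hbdd j
      simpa [e, gainOp] using this
    have hbdd2 : BddAbove (Set.range fun i' => |gainOp γ e i'|) := by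
      rw [habs_range (gainOp γ e) (fun i' => gnn e hen i')]
      exact hwd e hen heb
    calc γ i j r ≤ gainOp γ e i := hΓe
      _ ≤ |gainOp γ e i| := le_abs_self _
      _ ≤ ⨆ i', |gainOp γ e i'| := le_ciSup hbdd2 i
      _ ≤ σ r := by simpa using h1
  -- inner families are bounded
  have innerle : ∀ x : ℕ → ℝ, 0 ≤ x → BddAbove (Set.range x) →
      ∀ i j, γ i j (x j) ≤ σ (⨆ m, |x m|) := by
    intro x hx hxb i j
    have h1 : x j ≤ ⨆ m, |x m| := by
      rw [habs_range x hx]; exact le_ciSup hxb j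
    calc γ i j (x j) ≤ σ (x j) := key1 i j _ (hx j)
      _ ≤ σ (⨆ m, |x m|) := hσm (hx j) ((hx j).trans h1) h1
  have innerbdd : ∀ x : ℕ → ℝ, 0 ≤ x → BddAbove (Set.range x) →
      ∀ i, BddAbove (Set.range fun j => γ i j (x j)) := by
    intro x hx hxb i
    exact ⟨σ (⨆ m, |x m|), by rintro _ ⟨j, rfl⟩; exact innerle x hx hxb i j⟩
  -- monotonicity
  have gmono : ∀ x y : ℕ → ℝ, 0 ≤ x → 0 ≤ y → BddAbove (Set.range y) → x ≤ y →
      ∀ i, gainOp γ x i ≤ gainOp γ y i := by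
    intro x y hx hy hyb hxy i
    apply ciSup_le
    intro j
    calc γ i j (x j) ≤ γ i j (y j) := hmono i j (hx j) (hy j) (hxy j)
      _ ≤ gainOp γ y i := le_ciSup (innerbdd y hy hyb i) j
  -- sub-max preservation
  have gmax_le : ∀ x y : ℕ → ℝ, 0 ≤ x → 0 ≤ y → BddAbove (Set.range x) →
      BddAbove (Set.range y) →
      ∀ i, gainOp γ (x ⊔ y) i ≤ max (gainOp γ x i) (gainOp γ y i) := by
    intro x y hx hy hxb hyb i
    apply ciSup_le
    intro j
    rcases le_total (x j) (y j) with h | h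
    · have hxy : (x ⊔ y) j = y j := by
        simp [Pi.sup_apply, sup_eq_right.mpr h]
      rw [hxy]
      exact (le_ciSup (innerbdd y hy hyb i) j).trans (le_max_right _ _)
    · have hxy : (x ⊔ y) j = x j := by
        simp [Pi.sup_apply, sup_eq_left.mpr h]
      rw [hxy]
      exact (le_ciSup (innerbdd x hx hxb i) j).trans (le_max_left _ _)
  -- iterates preserve nonnegativity and boundedness
  have itgood : ∀ x : ℕ → ℝ, 0 ≤ x → BddAbove (Set.range x) → ∀ m,
      0 ≤ (gainOp γ)^[m] x ∧ BddAbove (Set.range ((gainOp γ)^[m] x)) := by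
    intro x hx hxb m
    induction m with
    | zero => simpa using ⟨hx, hxb⟩
    | succ m ih =>
      rw [Function.iterate_succ_apply']
      exact ⟨fun i => gnn _ ih.1 i, hwd _ ih.1 ih.2⟩
  -- iterates sub-preserve max
  have itmax : ∀ x y : ℕ → ℝ, 0 ≤ x → 0 ≤ y → BddAbove (Set.range x) →
      BddAbove (Set.range y) → ∀ m i,
      (gainOp γ)^[m] (x ⊔ y) i ≤ max ((gainOp γ)^[m] x i) ((gainOp γ)^[m] y i) := by
    intro x y hx hy hxb hyb m
    induction m with
    | zero => intro i; simp [Pi.sup_apply]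
    | succ m ih =>
      intro i
      have hxyn : 0 ≤ x ⊔ y := le_trans hx le_sup_left
      have hxyb : BddAbove (Set.range (x ⊔ y)) := bddAbove_range_sup hxb hyb
      have h1 : (gainOp γ)^[m] (x ⊔ y) ≤ (gainOp γ)^[m] x ⊔ (gainOp γ)^[m] y := by
        intro i'
        simpa [Pi.sup_apply] using ih i'
      have hmn := (itgood (x ⊔ y) hxyn hxyb m).1
      have hxn := itgood x hx hxb m
      have hyn := itgood y hy hyb m
      have hsupn : 0 ≤ (gainOp γ)^[m] x ⊔ (gainOp γ)^[m] y :=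
        le_trans hxn.1 le_sup_left
      have hsupb : BddAbove (Set.range ((gainOp γ)^[m] x ⊔ (gainOp γ)^[m] y)) :=
        bddAbove_range_sup hxn.2 hyn.2
      rw [Function.iterate_succ_apply', Function.iterate_succ_apply',
        Function.iterate_succ_apply']
      calc gainOp γ ((gainOp γ)^[m] (x ⊔ y)) i
          ≤ gainOp γ ((gainOp γ)^[m] x ⊔ (gainOp γ)^[m] y) i :=
            gmono _ _ hmn hsupn hsupb h1 i
        _ ≤ max (gainOp γ ((gainOp γ)^[m] x) i) (gainOp γ ((gainOp γ)^[m] y) i) :=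
            gmax_le _ _ hxn.1 hyn.1 hxn.2 hyn.2 i
  -- the constant M
  set M : ℝ := σ (⨆ i, |b i|) with hM
  have hbnorm0 : (0:ℝ) ≤ ⨆ i, |b i| := Real.iSup_nonneg (fun i => abs_nonneg _)
  have hM0 : 0 ≤ M := by
    rw [hM, ← hσ0]
    rcases eq_or_lt_of_le hbnorm0 with h | h
    · rw [← h]
    · exact le_of_lt (hσmono Set.self_mem_Ici hbnorm0 h)
  -- iterates of b are bounded by M
  have hUGSb : ∀ m i, (gainOp γ)^[m] b i ≤ M := by
    intro m i
    have hgood := itgood b hb hbb m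
    have hbdd : BddAbove (Set.range fun i' => |(gainOp γ)^[m] b i'|) := by
      rw [habs_range _ hgood.1]; exact hgood.2
    calc (gainOp γ)^[m] b i ≤ |(gainOp γ)^[m] b i| := le_abs_self _
      _ ≤ ⨆ i', |(gainOp γ)^[m] b i'| := le_ciSup hbdd i
      _ ≤ M := hUGS b hb hbb m
  -- Bseq is nonneg and bounded
  have hBgood : ∀ k, 0 ≤ Bseq γ b k ∧ BddAbove (Set.range (Bseq γ b k)) := by
    intro k
    induction k with
    | zero => exact ⟨hb, hbb⟩
    | succ k ih =>
      constructor
      · intro i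
        simp only [Bseq, Pi.sup_apply]
        exact le_trans (gnn _ ih.1 i) (le_max_left _ _)
      · show BddAbove (Set.range (gainOp γ (Bseq γ b k) ⊔ b))
        exact bddAbove_range_sup (hwd _ ih.1 ih.2) hbb
  -- iterates of Bseq are bounded by M
  have hF : ∀ k m i, (gainOp γ)^[m] (Bseq γ b k) i ≤ M := by
    intro k
    induction k with
    | zero => exact hUGSb
    | succ k ih =>
      intro m i
      have hΓB : 0 ≤ gainOp γ (Bseq γ b k) := fun i' => gnn _ (hBgood k).1 i'
      have hΓBb : BddAbove (Set.range (gainOp γ (Bseq γ b k))) :=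
        hwd _ (hBgood k).1 (hBgood k).2
      have h1 : (gainOp γ)^[m] (Bseq γ b (k+1)) i ≤
          max ((gainOp γ)^[m] (gainOp γ (Bseq γ b k)) i) ((gainOp γ)^[m] b i) := by
        show (gainOp γ)^[m] (gainOp γ (Bseq γ b k) ⊔ b) i ≤ _
        exact itmax _ _ hΓB hb hΓBb hbb m i
      have h2 : (gainOp γ)^[m] (gainOp γ (Bseq γ b k)) i ≤ M := by
        rw [← Function.iterate_succ_apply]
        exact ih (m+1) i
      exact h1.trans (max_le h2 (hUGSb m i))
  -- main induction
  have hQ : ∀ k i, s i ≤ max ((gainOp γ)^[k+1] s i) (Bseq γ b k i) := by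
    intro k
    induction k with
    | zero =>
      intro i
      have := hle i
      simpa [Pi.sup_apply, Bseq] using this
    | succ k ih =>
      intro i
      have h1 : s i ≤ max (gainOp γ s i) (b i) := by
        have := hle i
        simpa [Pi.sup_apply] using this
      have huvn : 0 ≤ (gainOp γ)^[k+1] s ⊔ Bseq γ b k :=
        le_trans (itgood s hs hsb (k+1)).1 le_sup_left
      have huvb : BddAbove (Set.range ((gainOp γ)^[k+1] s ⊔ Bseq γ b k)) :=
        bddAbove_range_sup (itgood s hs hsb (k+1)).2 (hBgood k).2
      have h2 : gainOp γ s i ≤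
          gainOp γ ((gainOp γ)^[k+1] s ⊔ Bseq γ b k) i := by
        apply gmono s _ hs huvn huvb _ i
        intro i'
        simpa [Pi.sup_apply] using ih i'
      have h3 : gainOp γ ((gainOp γ)^[k+1] s ⊔ Bseq γ b k) i ≤
          max (gainOp γ ((gainOp γ)^[k+1] s) i) (gainOp γ (Bseq γ b k) i) :=
        gmax_le _ _ (itgood s hs hsb (k+1)).1 (hBgood k).1
          (itgood s hs hsb (k+1)).2 (hBgood k).2 i
      have h4 : gainOp γ ((gainOp γ)^[k+1] s) i = (gainOp γ)^[k+2] s i :=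
        congrFun (Function.iterate_succ_apply' (gainOp γ) (k+1) s).symm i
      have h5 : gainOp γ (Bseq γ b k) i ≤ Bseq γ b (k+1) i := by
        show _ ≤ (gainOp γ (Bseq γ b k) ⊔ b) i
        simp [Pi.sup_apply]
      have h6 : b i ≤ Bseq γ b (k+1) i := by
        show _ ≤ (gainOp γ (Bseq γ b k) ⊔ b) i
        simp [Pi.sup_apply]
      have h7 : gainOp γ s i ≤ max ((gainOp γ)^[k+2] s i) (Bseq γ b (k+1) i) := by
        refine h2.trans (h3.trans ?_)
        rw [h4]
        exact max_le_max le_rfl h5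
      exact h1.trans (max_le h7 (h6.trans (le_max_right _ _)))
  -- conclude pointwise
  have hpt : ∀ i, s i ≤ M := by
    intro i
    have hQ' : ∀ k, s i ≤ max ((gainOp γ)^[k+1] s i) M := by
      intro k
      refine (hQ k i).trans (max_le_max le_rfl ?_)
      simpa using hF k 0 i
    have hT : Filter.Tendsto (fun k => max ((gainOp γ)^[k+1] s i) M)
        Filter.atTop (nhds (max 0 M)) := by
      apply Filter.Tendsto.max _ tendsto_const_nhds
      exact (hcomp s hs hsb i).comp (Filter.tendsto_add_atTop_nat 1)
    have := ge_of_tendsto' hT hQ'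
    rwa [max_eq_right hM0] at this
  rw [habs_range s hs]
  exact ciSup_le hpt
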